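/- For every integer n ≥ 2, every v ∈ V_{n-1}, and every τ > 0, there exists ρ > 0 such that the following holds: for every u ∈ ℂⁿ⁻¹ with Θ(u) = v and every û ∈ ℂⁿ⁻¹ with Θ(û) ∈ V_{n-1} and ‖û − u‖ < ρ, one has {z ∈ ℂ : |p_û(z)| < 1} ⊆ {z ∈ ℂ : |p_u(z)| < 2}, and for all z, z' ∈ {w ∈ ℂ : |p_u(w)| < 2} with |z − z'| < ρ one has |p_u(z) − p_û(z')| < τ. -/

import Mathlib

open Polynomial

/-- The formal antiderivative (with zero constant term) of a complex polynomial. -/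
noncomputable def polyAntideriv (q : Polynomial ℂ) : Polynomial ℂ :=
  q.sum fun k a => Polynomial.C (a / ((k : ℂ) + 1)) * Polynomial.X ^ (k + 1)

/-- For `u ∈ ℂᵐ`, `criticalPoly u` is the unique monic polynomial `p` of degree `m + 1`
with `p(0) = 0` and `p' = (m + 1)·∏ᵢ (X − uᵢ)`; its critical points are prescribed by `u`. -/
noncomputable def criticalPoly {m : ℕ} (u : Fin m → ℂ) : Polynomial ℂ :=
  polyAntideriv (Polynomial.C ((m : ℂ) + 1) * ∏ i, (Polynomial.X - Polynomial.C (u i)))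

/-- The map `Θ` sending a list of prescribed critical points to the corresponding list of
critical values. -/
noncomputable def Theta {m : ℕ} (u : Fin m → ℂ) : Fin m → ℂ :=
  fun i => (criticalPoly u).eval (u i)

/-- `V_m`: the set of `v ∈ ℂᵐ` with `0 ≤ |v 0| ≤ ⋯ ≤ |v (m-1)| < 1`. -/
def Vset (m : ℕ) : Set (Fin m → ℂ) :=
  {v | (Monotone fun i => ‖v i‖) ∧ ∀ i, ‖v i‖ < 1}

section Aux
open Finset

lemma natcast_succ_ne (k : ℕ) : ((k : ℂ) + 1) ≠ 0 := by
  exact_mod_cast Nat.cast_add_one_ne_zero (R := ℂ) k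

lemma polyAntideriv_eval (q : Polynomial ℂ) {N : ℕ} (h : q.natDegree < N) (z : ℂ) :
    (polyAntideriv q).eval z = ∑ k ∈ Finset.range N, (q.coeff k / ((k : ℂ) + 1)) * z ^ (k + 1) := by
  have h1 : (polyAntideriv q).eval z = q.sum fun k a => (a / ((k:ℂ)+1)) * z^(k+1) := by
    unfold polyAntideriv
    rw [Polynomial.sum_def, Polynomial.eval_finset_sum, Polynomial.sum_def]
    simp
  rw [h1, Polynomial.sum_over_range' q (by intro n; simp) N h]

lemma polyAntideriv_coeff_succ (q : Polynomial ℂ) (k : ℕ) :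
    (polyAntideriv q).coeff (k + 1) = q.coeff k / ((k : ℂ) + 1) := by
  unfold polyAntideriv
  rw [Polynomial.sum_def, Polynomial.finset_sum_coeff]
  simp only [Polynomial.coeff_C_mul, Polynomial.coeff_X_pow]
  rw [Finset.sum_eq_single k]
  · by_cases hk : k ∈ q.support
    · simp
    · simp [Polynomial.notMem_support_iff.mp hk]
  · intro b _ hb
    simp only [if_neg (show ¬(k + 1 = b + 1) by omega), mul_zero]
  · intro hk
    simp [Polynomial.notMem_support_iff.mp hk]

lemma polyAntideriv_coeff_zero (q : Polynomial ℂ) : (polyAntideriv q).coeff 0 = 0 := by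
  unfold polyAntideriv
  rw [Polynomial.sum_def, Polynomial.finset_sum_coeff]
  simp

lemma derivative_polyAntideriv (q : Polynomial ℂ) :
    Polynomial.derivative (polyAntideriv q) = q := by
  unfold polyAntideriv
  rw [Polynomial.sum_def, map_sum]
  have h2 : ∀ k ∈ q.support, Polynomial.derivative (Polynomial.C (q.coeff k / ((k:ℂ) + 1)) * Polynomial.X ^ (k + 1)) = Polynomial.C (q.coeff k) * Polynomial.X ^ k := by
    intro k _
    rw [Polynomial.derivative_C_mul, Polynomial.derivative_X_pow, Nat.add_sub_cancel,
      ← mul_assoc, ← Polynomial.C_mul]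
    congr 1
    push_cast
    rw [div_mul_cancel₀ _ (natcast_succ_ne k)]
  rw [Finset.sum_congr rfl h2]
  exact Polynomial.sum_C_mul_X_pow_eq q

lemma prod_eq_multiset {m : ℕ} (w : Fin m → ℂ) :
    (∏ i, (Polynomial.X - Polynomial.C (w i)))
      = ((Finset.univ.val.map w).map fun t => Polynomial.X - Polynomial.C t).prod := by
  rw [Finset.prod_eq_multiset_prod, Multiset.map_map]
  rfl

noncomputable def esym (m j : ℕ) (u : Fin m → ℂ) : ℂ :=
  ∑ t ∈ Finset.powersetCard j Finset.univ, ∏ i ∈ t, u i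

lemma prod_monic {m : ℕ} (u : Fin m → ℂ) :
    (∏ i, (Polynomial.X - Polynomial.C (u i))).Monic :=
  Polynomial.monic_prod_of_monic _ _ fun i _ => Polynomial.monic_X_sub_C (u i)

lemma prod_natDegree {m : ℕ} (u : Fin m → ℂ) :
    (∏ i, (Polynomial.X - Polynomial.C (u i))).natDegree = m := by
  rw [Polynomial.natDegree_prod_of_monic _ _ fun i _ => Polynomial.monic_X_sub_C (u i)]
  simp

lemma prod_coeff {m : ℕ} (u : Fin m → ℂ) {k : ℕ} (hk : k ≤ m) :
    (∏ i, (Polynomial.X - Polynomial.C (u i))).coeff k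
      = (-1) ^ (m - k) * esym m (m - k) u := by
  have h1 := prod_eq_multiset u
  have hcard : Multiset.card (Finset.univ.val.map u) = m := by simp
  rw [h1, Multiset.prod_X_sub_C_coeff _ (by rw [hcard]; exact hk), hcard]
  congr 1
  rw [Finset.esymm_map_val]
  rfl

lemma qpoly_natDegree {m : ℕ} (u : Fin m → ℂ) :
    (Polynomial.C ((m : ℂ) + 1) * ∏ i, (Polynomial.X - Polynomial.C (u i))).natDegree = m := by
  rw [Polynomial.natDegree_C_mul (natcast_succ_ne m), prod_natDegree]

lemma criticalPoly_coeff_succ {m : ℕ} (u : Fin m → ℂ) (k : ℕ) :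
    (criticalPoly u).coeff (k + 1)
      = ((m : ℂ) + 1) * (∏ i, (Polynomial.X - Polynomial.C (u i))).coeff k / ((k : ℂ) + 1) := by
  unfold criticalPoly
  rw [polyAntideriv_coeff_succ, Polynomial.coeff_C_mul]

lemma criticalPoly_natDegree_le {m : ℕ} (u : Fin m → ℂ) :
    (criticalPoly u).natDegree ≤ m + 1 := by
    rw [Polynomial.natDegree_le_iff_coeff_eq_zero]
    intro N hN
    obtain ⟨k, rfl⟩ : ∃ k, N = k + 1 := ⟨N - 1, by omega⟩
    rw [criticalPoly_coeff_succ]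
    rw [Polynomial.coeff_eq_zero_of_natDegree_lt (by rw [prod_natDegree]; omega)]
    simp

lemma criticalPoly_coeff_top {m : ℕ} (u : Fin m → ℂ) :
    (criticalPoly u).coeff (m + 1) = 1 := by
  rw [criticalPoly_coeff_succ]
  have : (∏ i, (Polynomial.X - Polynomial.C (u i))).coeff m = 1 := by
    have := (prod_monic u).coeff_natDegree
    rwa [prod_natDegree] at this
  rw [this, mul_one, div_self (natcast_succ_ne m)]

lemma criticalPoly_monic {m : ℕ} (u : Fin m → ℂ) : (criticalPoly u).Monic :=
  Polynomial.monic_of_natDegree_le_of_coeff_eq_one (m + 1) (criticalPoly_natDegree_le u)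
    (criticalPoly_coeff_top u)

lemma criticalPoly_natDegree {m : ℕ} (u : Fin m → ℂ) :
    (criticalPoly u).natDegree = m + 1 :=
  le_antisymm (criticalPoly_natDegree_le u)
    (Polynomial.le_natDegree_of_ne_zero (by rw [criticalPoly_coeff_top]; exact one_ne_zero))

lemma criticalPoly_eval {m : ℕ} (u : Fin m → ℂ) (z : ℂ) :
    (criticalPoly u).eval z
      = ∑ k ∈ Finset.range (m + 1),
          (((m : ℂ) + 1) * (∏ i, (Polynomial.X - Polynomial.C (u i))).coeff k / ((k : ℂ) + 1))
            * z ^ (k + 1) := by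
  unfold criticalPoly
  rw [polyAntideriv_eval _ (show _ < m+1 from by rw [qpoly_natDegree]; omega)]
  refine Finset.sum_congr rfl fun k _ => ?_
  rw [Polynomial.coeff_C_mul]

noncomputable def cpCoeff (m k : ℕ) (u : Fin m → ℂ) : ℂ :=
  ((m : ℂ) + 1) * ((-1) ^ (m - k) * esym m (m - k) u) / ((k : ℂ) + 1)

lemma criticalPoly_eval' {m : ℕ} (u : Fin m → ℂ) (z : ℂ) :
    (criticalPoly u).eval z
      = ∑ k ∈ Finset.range (m + 1), cpCoeff m k u * z ^ (k + 1) := by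
  rw [criticalPoly_eval]
  refine Finset.sum_congr rfl fun k hk => ?_
  rw [prod_coeff u (Nat.lt_succ_iff.mp (Finset.mem_range.mp hk))]
  rfl

lemma esym_zero (m : ℕ) (u : Fin m → ℂ) : esym m 0 u = 1 := by
  simp [esym]

lemma cpCoeff_top (m : ℕ) (u : Fin m → ℂ) : cpCoeff m m u = 1 := by
  unfold cpCoeff
  rw [Nat.sub_self, esym_zero, pow_zero, one_mul, mul_one]
  exact div_self (by exact_mod_cast Nat.cast_add_one_ne_zero (R := ℂ) m)

lemma esym_continuous (m j : ℕ) : Continuous (esym m j) := by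
  apply continuous_finset_sum
  intro t _
  exact continuous_finset_prod t fun i _ => continuous_apply i

lemma continuous_evalCP (m : ℕ) :
    Continuous fun p : (Fin m → ℂ) × ℂ => (criticalPoly p.1).eval p.2 := by
  have h : (fun p : (Fin m → ℂ) × ℂ => (criticalPoly p.1).eval p.2)
      = fun p => ∑ k ∈ Finset.range (m + 1), cpCoeff m k p.1 * p.2 ^ (k + 1) := by
    funext p
    exact criticalPoly_eval' p.1 p.2
  rw [h]
  apply continuous_finset_sum
  intro k _
  have h1 : Continuous fun p : (Fin m → ℂ) × ℂ => cpCoeff m k p.1 := by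
    unfold cpCoeff
    exact ((continuous_const.mul
      (continuous_const.mul ((esym_continuous m (m - k)).comp continuous_fst))).div_const _)
  exact h1.mul ((continuous_pow (k + 1)).comp continuous_snd)

lemma esym_smul (m j : ℕ) (t : ℂ) (u : Fin m → ℂ) :
    esym m j (t • u) = t ^ j * esym m j u := by
  unfold esym
  rw [Finset.mul_sum]
  refine Finset.sum_congr rfl fun s hs => ?_
  have hcard : s.card = j := (Finset.mem_powersetCard.mp hs).2
  rw [← hcard, ← Finset.prod_const t, ← Finset.prod_mul_distrib]
  rfl

lemma theta_smul {m : ℕ} (t : ℂ) (u : Fin m → ℂ) :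
    Theta (t • u) = t ^ (m + 1) • Theta u := by
  funext i
  show (criticalPoly (t • u)).eval ((t • u) i) = t ^ (m + 1) * (criticalPoly u).eval (u i)
  rw [criticalPoly_eval', criticalPoly_eval', Finset.mul_sum]
  refine Finset.sum_congr rfl fun k hk => ?_
  have hk' : k ≤ m := Nat.lt_succ_iff.mp (Finset.mem_range.mp hk)
  have h1 : cpCoeff m k (t • u) = t ^ (m - k) * cpCoeff m k u := by
    unfold cpCoeff
    rw [esym_smul]
    ring
  have h2 : ((t • u) i) ^ (k + 1) = t ^ (k + 1) * (u i) ^ (k + 1) := by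
    show (t * u i) ^ (k + 1) = _
    rw [mul_pow]
  rw [h1, h2]
  have h3 : t ^ (m - k) * (t ^ (k + 1)) = t ^ (m + 1) := by
    rw [← pow_add]
    congr 1
    omega
  have h4 : t ^ (m - k) * cpCoeff m k u * (t ^ (k + 1) * u i ^ (k + 1))
      = t ^ (m - k) * t ^ (k + 1) * (cpCoeff m k u * u i ^ (k + 1)) := by ring
  rw [h4, h3]

lemma cpCoeff_bound {m : ℕ} (k : ℕ) (u : Fin m → ℂ) :
    ‖cpCoeff m k u‖ ≤ ((m : ℝ) + 1) * 2 ^ m * (max 1 ‖u‖) ^ m := by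
  have hM1 : (1 : ℝ) ≤ max 1 ‖u‖ := le_max_left _ _
  have hM0 : (0 : ℝ) ≤ max 1 ‖u‖ := le_trans zero_le_one hM1
  have hesym : ‖esym m (m - k) u‖ ≤ 2 ^ m * (max 1 ‖u‖) ^ m := by
    unfold esym
    set M := max 1 ‖u‖
    calc ‖∑ t ∈ Finset.powersetCard (m - k) Finset.univ, ∏ i ∈ t, u i‖
        ≤ ∑ t ∈ Finset.powersetCard (m - k) Finset.univ, ‖∏ i ∈ t, u i‖ :=
          norm_sum_le _ _
      _ ≤ ∑ _t ∈ Finset.powersetCard (m - k) Finset.univ, M ^ m := by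
          refine Finset.sum_le_sum fun t _ => ?_
          rw [norm_prod]
          calc ∏ i ∈ t, ‖u i‖
              ≤ ∏ _i ∈ t, M := by
                refine Finset.prod_le_prod (fun i _ => norm_nonneg _) fun i _ => ?_
                calc ‖u i‖ = ‖u i‖ := rfl
                  _ ≤ ‖u‖ := norm_le_pi_norm u i
                  _ ≤ M := le_max_right _ _
            _ = M ^ t.card := by rw [Finset.prod_const]
            _ ≤ M ^ m := by
                refine pow_le_pow_right₀ hM1 ?_
                calc t.card ≤ Finset.univ.card := Finset.card_le_card (Finset.subset_univ t)
                  _ = m := by simp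
      _ = (Finset.powersetCard (m - k) (Finset.univ : Finset (Fin m))).card * M ^ m := by
          rw [Finset.sum_const, nsmul_eq_mul]
      _ ≤ 2 ^ m * M ^ m := by
          have hMm : (0:ℝ) ≤ M ^ m := pow_nonneg hM0 m
          refine mul_le_mul_of_nonneg_right ?_ hMm
          have hsub : Finset.powersetCard (m - k) (Finset.univ : Finset (Fin m))
              ⊆ (Finset.univ : Finset (Fin m)).powerset := by
            intro t ht
            exact Finset.mem_powerset.mpr (Finset.mem_powersetCard.mp ht).1
          calc ((Finset.powersetCard (m - k) (Finset.univ : Finset (Fin m))).card : ℝ)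
              ≤ ((Finset.univ : Finset (Fin m)).powerset.card : ℝ) := by
                exact_mod_cast Finset.card_le_card hsub
            _ = 2 ^ m := by rw [Finset.card_powerset]; simp
  have habsm : ‖(m : ℂ) + 1‖ = (m : ℝ) + 1 := by
    have : ((m : ℂ) + 1) = ((m + 1 : ℕ) : ℂ) := by push_cast; ring
    rw [this, Complex.norm_natCast]
    push_cast; ring
  have habsk : (1:ℝ) ≤ ‖(k : ℂ) + 1‖ := by
    have : ((k : ℂ) + 1) = ((k + 1 : ℕ) : ℂ) := by push_cast; ring
    rw [this, Complex.norm_natCast]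
    exact_mod_cast Nat.one_le_iff_ne_zero.mpr (Nat.succ_ne_zero k)
  unfold cpCoeff
  rw [norm_div, norm_mul, norm_mul, norm_pow, norm_neg, norm_one, one_pow, one_mul, habsm]
  calc ((m : ℝ) + 1) * ‖esym m (m - k) u‖ / ‖(k : ℂ) + 1‖
      ≤ ((m : ℝ) + 1) * ‖esym m (m - k) u‖ := by
        refine div_le_self (by positivity) habsk
    _ ≤ ((m : ℝ) + 1) * (2 ^ m * (max 1 ‖u‖) ^ m) := by
        refine mul_le_mul_of_nonneg_left hesym (by positivity)
    _ = ((m : ℝ) + 1) * 2 ^ m * (max 1 ‖u‖) ^ m := by ring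

lemma growth_bound {m : ℕ} (R : ℝ) :
    ∃ M : ℝ, 1 ≤ M ∧ ∀ u : Fin m → ℂ, ‖u‖ ≤ R → ∀ z : ℂ,
      M ≤ ‖z‖ → 2 ≤ ‖(criticalPoly u).eval z‖ := by
  set B : ℝ := ((m : ℝ) + 1) * 2 ^ m * (max 1 R) ^ m with hB
  have hB0 : 0 ≤ B := by positivity
  have hmB0 : 0 ≤ (m:ℝ) * B := mul_nonneg (Nat.cast_nonneg m) hB0
  refine ⟨m * B + 2, by linarith, fun u hu z hz => ?_⟩
  have hz1 : (1:ℝ) ≤ ‖z‖ := by linarith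
  have hz0 : (0:ℝ) ≤ ‖z‖ := by linarith
  have hcb : ∀ k : ℕ, ‖cpCoeff m k u‖ ≤ B := by
    intro k
    refine (cpCoeff_bound k u).trans ?_
    rw [hB]
    have : (max 1 ‖u‖) ^ m ≤ (max 1 R) ^ m := by
      refine pow_le_pow_left₀ (le_trans zero_le_one (le_max_left _ _)) ?_ m
      exact max_le_max le_rfl hu
    exact mul_le_mul_of_nonneg_left this (by positivity)
  rw [criticalPoly_eval' u z, Finset.sum_range_succ, cpCoeff_top, one_mul]
  have htail : ‖∑ k ∈ Finset.range m, cpCoeff m k u * z ^ (k + 1)‖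
      ≤ m * (B * ‖z‖ ^ m) := by
    calc ‖∑ k ∈ Finset.range m, cpCoeff m k u * z ^ (k + 1)‖
        ≤ ∑ k ∈ Finset.range m, ‖cpCoeff m k u * z ^ (k + 1)‖ :=
          norm_sum_le _ _
      _ ≤ ∑ _k ∈ Finset.range m, B * ‖z‖ ^ m := by
          refine Finset.sum_le_sum fun k hk => ?_
          rw [norm_mul, norm_pow]
          have h1 : ‖z‖ ^ (k + 1) ≤ ‖z‖ ^ m :=
            pow_le_pow_right₀ hz1 (Finset.mem_range.mp hk)
          exact mul_le_mul (hcb k) h1 (by positivity) hB0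
      _ = m * (B * ‖z‖ ^ m) := by rw [Finset.sum_const, nsmul_eq_mul]; simp
  have hmain : ‖z‖ ^ (m + 1) - m * (B * ‖z‖ ^ m)
      ≤ ‖∑ k ∈ Finset.range m, cpCoeff m k u * z ^ (k + 1) + z ^ (m + 1)‖ := by
    calc ‖z‖ ^ (m + 1) - m * (B * ‖z‖ ^ m)
        ≤ ‖z ^ (m + 1)‖ - ‖∑ k ∈ Finset.range m, cpCoeff m k u * z ^ (k + 1)‖ := by
          rw [norm_pow]
          linarith [htail]
      _ ≤ ‖∑ k ∈ Finset.range m, cpCoeff m k u * z ^ (k + 1) + z ^ (m + 1)‖ := by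
          have h3 := norm_add_le
            (∑ k ∈ Finset.range m, cpCoeff m k u * z ^ (k + 1) + z ^ (m + 1))
            (-(∑ k ∈ Finset.range m, cpCoeff m k u * z ^ (k + 1)))
          rw [norm_neg] at h3
          have h4 : (∑ k ∈ Finset.range m, cpCoeff m k u * z ^ (k + 1) + z ^ (m + 1))
              + -(∑ k ∈ Finset.range m, cpCoeff m k u * z ^ (k + 1)) = z ^ (m + 1) := by ring
          rw [h4] at h3
          linarith
  have hfin : 2 ≤ ‖z‖ ^ (m + 1) - m * (B * ‖z‖ ^ m) := by
    have hpow : ‖z‖ ^ (m + 1) = ‖z‖ ^ m * ‖z‖ := pow_succ _ m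
    have hzm1 : (1:ℝ) ≤ ‖z‖ ^ m := one_le_pow₀ hz1
    have h5 : ‖z‖ ^ m * ((m:ℝ) * B + 2) ≤ ‖z‖ ^ m * ‖z‖ :=
      mul_le_mul_of_nonneg_left hz (by positivity)
    nlinarith [h5, hzm1, hmB0]
  linarith

lemma criticalPoly_eval_zero {m : ℕ} (u : Fin m → ℂ) : (criticalPoly u).eval 0 = 0 := by
  rw [criticalPoly_eval']
  exact Finset.sum_eq_zero fun k _ => by simp

lemma critical_values_zero_implies_zero {m : ℕ} (hm : 1 ≤ m) (w : Fin m → ℂ)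
    (h : ∀ i, (criticalPoly w).eval (w i) = 0) : w = 0 := by
  classical
  set p := criticalPoly w with hpdef
  have hpne : p ≠ 0 := (criticalPoly_monic w).ne_zero
  have hd : Polynomial.derivative p
      = Polynomial.C ((m : ℂ) + 1) * ∏ i, (Polynomial.X - Polynomial.C (w i)) :=
    derivative_polyAntideriv _
  have hdroots : (Polynomial.derivative p).roots = Finset.univ.val.map w := by
    rw [hd, Polynomial.roots_C_mul _ (natcast_succ_ne m), prod_eq_multiset,
      Polynomial.roots_multiset_prod_X_sub_C]
  have hroot : ∀ i, p.IsRoot (w i) := fun i => h i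
  set s : Finset ℂ := (Finset.univ.val.map w).toFinset with hsdef
  have hmem : ∀ i, w i ∈ s := by
    intro i
    rw [hsdef, Multiset.mem_toFinset]
    exact Multiset.mem_map_of_mem w (Finset.mem_univ_val i)
  have hsub : s ⊆ p.roots.toFinset := by
    intro c hc
    rw [hsdef, Multiset.mem_toFinset, Multiset.mem_map] at hc
    obtain ⟨i, _, rfl⟩ := hc
    rw [Multiset.mem_toFinset, Polynomial.mem_roots hpne]
    exact hroot i
  -- count equality on s
  have hcount : ∀ c ∈ s, p.roots.count c = (Polynomial.derivative p).roots.count c + 1 := by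
    intro c hc
    rw [hsdef, Multiset.mem_toFinset, Multiset.mem_map] at hc
    obtain ⟨i, _, rfl⟩ := hc
    rw [Polynomial.count_roots, Polynomial.count_roots,
      Polynomial.derivative_rootMultiplicity_of_root (hroot i)]
    have hpos : 0 < p.rootMultiplicity (w i) :=
      (Polynomial.rootMultiplicity_pos hpne).mpr (hroot i)
    omega
  have hsum_le : ∑ c ∈ s, p.roots.count c ≤ m + 1 := by
    calc ∑ c ∈ s, p.roots.count c
        ≤ ∑ c ∈ p.roots.toFinset, p.roots.count c :=
          Finset.sum_le_sum_of_subset hsub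
      _ = Multiset.card p.roots := Multiset.toFinset_sum_count_eq _
      _ ≤ p.natDegree := Polynomial.card_roots' p
      _ = m + 1 := criticalPoly_natDegree w
  have hsum_der : ∑ c ∈ s, (Polynomial.derivative p).roots.count c = m := by
    have : s = (Polynomial.derivative p).roots.toFinset := by rw [hdroots]
    rw [this, Multiset.toFinset_sum_count_eq, hdroots]
    simp
  have hcards : s.card ≤ 1 := by
    have : ∑ c ∈ s, ((Polynomial.derivative p).roots.count c + 1) ≤ m + 1 := by
      rw [← Finset.sum_congr rfl hcount]
      exact hsum_le
    rw [Finset.sum_add_distrib, hsum_der, Finset.sum_const, smul_eq_mul, mul_one] at this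
    omega
  -- all w i equal
  have i0 : Fin m := ⟨0, hm⟩
  set c := w i0 with hcdef
  have hall : ∀ i, w i = c := by
    intro i
    exact Finset.card_le_one.mp hcards _ (hmem i) _ (hmem i0)
  -- count of c in derivative roots is m
  have hrep : Finset.univ.val.map w = Multiset.replicate m c := by
    have : Finset.univ.val.map w = Finset.univ.val.map (fun _ : Fin m => c) :=
      Multiset.map_congr rfl fun i _ => hall i
    rw [this]
    simp [Multiset.map_const']
  have hcount_c : p.roots.count c = m + 1 := by
    rw [hcount c (hmem i0), hdroots, hrep, Multiset.count_replicate_self]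
  -- 0 is a root
  have h0root : p.IsRoot 0 := criticalPoly_eval_zero w
  by_cases hc0 : c = 0
  · funext i
    simp [hall i, hc0]
  · exfalso
    have h0mem : (0 : ℂ) ∈ p.roots.toFinset := by
      rw [Multiset.mem_toFinset, Polynomial.mem_roots hpne]
      exact h0root
    have hcmem : c ∈ p.roots.toFinset := hsub (hmem i0)
    have hsum2 : p.roots.count c + p.roots.count 0 ≤ Multiset.card p.roots := by
      have : ({c, 0} : Finset ℂ) ⊆ p.roots.toFinset := by
        intro x hx
        rcases Finset.mem_insert.mp hx with rfl | hx
        · exact hcmem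
        · rw [Finset.mem_singleton.mp hx]; exact h0mem
      calc p.roots.count c + p.roots.count 0
          = ∑ x ∈ ({c, 0} : Finset ℂ), p.roots.count x := by
            rw [Finset.sum_insert (by simp [hc0]), Finset.sum_singleton]
        _ ≤ ∑ x ∈ p.roots.toFinset, p.roots.count x := Finset.sum_le_sum_of_subset this
        _ = Multiset.card p.roots := Multiset.toFinset_sum_count_eq _
    have hcard : Multiset.card p.roots ≤ m + 1 :=
      (Polynomial.card_roots' p).trans_eq (criticalPoly_natDegree w)
    have h0pos : 0 < p.roots.count 0 := by
      rw [Polynomial.count_roots]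
      exact (Polynomial.rootMultiplicity_pos hpne).mpr h0root
    omega

lemma continuous_theta (m : ℕ) : Continuous (Theta (m := m)) := by
  apply continuous_pi
  intro i
  exact (continuous_evalCP m).comp (continuous_id.prodMk (continuous_apply i))

lemma fiber_bound {m : ℕ} (hm : 1 ≤ m) :
    ∃ C : ℝ, 0 ≤ C ∧ ∀ u : Fin m → ℂ, (∀ i, ‖Theta u i‖ ≤ 1) → ‖u‖ ≤ C := by
  have hS : IsCompact (Metric.sphere (0 : Fin m → ℂ) 1) := isCompact_sphere _ _
  have hne : (Metric.sphere (0 : Fin m → ℂ) 1).Nonempty := by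
    refine ⟨fun _ => 1, ?_⟩
    rw [mem_sphere_zero_iff_norm]
    have : Nonempty (Fin m) := ⟨⟨0, hm⟩⟩
    simp [pi_norm_const]
  obtain ⟨w₀, hw₀S, hmin⟩ := hS.exists_isMinOn hne
    ((continuous_theta m).norm.continuousOn)
  set ε := ‖Theta w₀‖ with hε
  have hεpos : 0 < ε := by
    rw [hε, norm_pos_iff]
    intro h0
    have hw0 : w₀ = 0 := by
      refine critical_values_zero_implies_zero hm w₀ fun i => ?_
      have := congrFun h0 i
      exact this
    rw [hw0] at hw₀S
    rw [mem_sphere_zero_iff_norm] at hw₀S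
    simp at hw₀S
  refine ⟨max 1 ε⁻¹, le_trans zero_le_one (le_max_left _ _), fun u hu => ?_⟩
  by_cases hu1 : ‖u‖ ≤ 1
  · exact hu1.trans (le_max_left _ _)
  push_neg at hu1
  set t : ℝ := ‖u‖ with ht
  have ht1 : 1 < t := hu1
  have ht0 : (0:ℝ) < t := by linarith
  have htne : ((t:ℝ) : ℂ) ≠ 0 := by
    simp only [ne_eq, Complex.ofReal_eq_zero]
    linarith
  set w : Fin m → ℂ := ((t:ℝ) : ℂ)⁻¹ • u with hw
  have hwS : w ∈ Metric.sphere (0 : Fin m → ℂ) 1 := by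
    rw [mem_sphere_zero_iff_norm, hw, norm_smul]
    rw [norm_inv]
    have : ‖((t:ℝ):ℂ)‖ = t := by
      rw [Complex.norm_real]
      exact abs_of_pos ht0
    rw [this, ← ht]
    exact inv_mul_cancel₀ ht0.ne'
  have huw : u = ((t:ℝ):ℂ) • w := by
    rw [hw, smul_inv_smul₀ htne]
  have hnorm : ‖Theta u‖ = t ^ (m + 1) * ‖Theta w‖ := by
    rw [huw, theta_smul, norm_smul, norm_pow]
    congr 2
    rw [Complex.norm_real]
    exact abs_of_pos ht0
  have hThu : ‖Theta u‖ ≤ 1 := by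
    refine pi_norm_le_iff_of_nonneg zero_le_one |>.mpr fun i => hu i
  have hεw : ε ≤ ‖Theta w‖ := hmin hwS
  have hup : t ^ (m + 1) * ε ≤ 1 := by
    calc t ^ (m + 1) * ε ≤ t ^ (m + 1) * ‖Theta w‖ := by
          exact mul_le_mul_of_nonneg_left hεw (by positivity)
      _ = ‖Theta u‖ := hnorm.symm
      _ ≤ 1 := hThu
  have htpow : t ≤ t ^ (m + 1) := by
    calc t = t ^ 1 := (pow_one t).symm
      _ ≤ t ^ (m + 1) := pow_le_pow_right₀ (le_of_lt ht1) (by omega)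
  have : t * ε ≤ 1 := by
    calc t * ε ≤ t ^ (m + 1) * ε := mul_le_mul_of_nonneg_right htpow (le_of_lt hεpos)
      _ ≤ 1 := hup
  have htinv : t ≤ ε⁻¹ := by
    calc t = (t * ε) * ε⁻¹ := by field_simp
      _ ≤ 1 * ε⁻¹ := mul_le_mul_of_nonneg_right this (by positivity)
      _ = ε⁻¹ := one_mul _
  exact htinv.trans (le_max_right _ _)

end Aux

/-- If `û` is close to some `u ∈ Θ⁻¹(v)` (with `Θ(û)` also in `V_{n-1}`), then `p_û` is
uniformly close to `p_u`: the tract `{|p_û| < 1}` is contained in `{|p_u| < 2}`, and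
`|p_u(z) − p_û(z')| < τ` whenever `z, z' ∈ {|p_u| < 2}` are within `ρ` of each other. -/
theorem criticalPoly_close_of_critical_points_close
    (n : ℕ) (hn : 2 ≤ n) (v : Fin (n - 1) → ℂ) (hv : v ∈ Vset (n - 1))
    (τ : ℝ) (hτ : 0 < τ) :
    ∃ ρ > 0, ∀ u : Fin (n - 1) → ℂ, Theta u = v →
      ∀ uh : Fin (n - 1) → ℂ, Theta uh ∈ Vset (n - 1) → ‖uh - u‖ < ρ →
        ({z : ℂ | ‖(criticalPoly uh).eval z‖ < 1} ⊆
          {z : ℂ | ‖(criticalPoly u).eval z‖ < 2}) ∧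
        ∀ z z' : ℂ, ‖(criticalPoly u).eval z‖ < 2 →
          ‖(criticalPoly u).eval z'‖ < 2 → ‖z - z'‖ < ρ →
            ‖(criticalPoly u).eval z - (criticalPoly uh).eval z'‖ < τ := by
  set m := n - 1 with hmdef
  have hm : 1 ≤ m := by omega
  obtain ⟨C, hC0, hCb⟩ := fiber_bound (m := m) hm
  obtain ⟨M, hM1, hMb⟩ := growth_bound (m := m) C
  -- compact set
  set K : Set ((Fin m → ℂ) × ℂ) :=
    (Metric.closedBall (0 : Fin m → ℂ) C) ×ˢ (Metric.closedBall (0 : ℂ) M) with hK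
  have hKcomp : IsCompact K :=
    (isCompact_closedBall _ _).prod (isCompact_closedBall _ _)
  have hUC : UniformContinuousOn
      (fun p : (Fin m → ℂ) × ℂ => (criticalPoly p.1).eval p.2) K :=
    hKcomp.uniformContinuousOn_of_continuous (continuous_evalCP m).continuousOn
  have hε : (0:ℝ) < min τ 1 := lt_min hτ one_pos
  obtain ⟨δ, hδ0, hδ⟩ := Metric.uniformContinuousOn_iff.mp hUC (min τ 1) hε
  refine ⟨δ, hδ0, fun u hu uh huh hdist => ?_⟩
  -- both u and uh are in the ball of radius C
  have hubd : ‖u‖ ≤ C := by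
    refine hCb u fun i => ?_
    rw [hu]
    exact le_of_lt (hv.2 i)
  have huhbd : ‖uh‖ ≤ C := by
    refine hCb uh fun i => ?_
    exact le_of_lt (huh.2 i)
  have humem : ∀ z : ℂ, ‖z‖ ≤ M → (u, z) ∈ K := by
    intro z hz
    constructor
    · rw [Metric.mem_closedBall, dist_zero_right]; exact hubd
    · rw [Metric.mem_closedBall, dist_zero_right]; exact hz
  have huhmem : ∀ z : ℂ, ‖z‖ ≤ M → (uh, z) ∈ K := by
    intro z hz
    constructor
    · rw [Metric.mem_closedBall, dist_zero_right]; exact huhbd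
    · rw [Metric.mem_closedBall, dist_zero_right]; exact hz
  constructor
  · -- tract inclusion
    intro z hz
    simp only [Set.mem_setOf_eq] at hz ⊢
    have hzM : ‖z‖ ≤ M := by
      by_contra hzM
      push_neg at hzM
      have := hMb uh huhbd z (le_of_lt hzM)
      linarith
    have hd : dist ((u, z) : (Fin m → ℂ) × ℂ) (uh, z) < δ := by
      rw [Prod.dist_eq]
      simp only [dist_self]
      rw [max_eq_left dist_nonneg]
      rw [dist_eq_norm, ← norm_sub_rev]
      exact hdist
    have := hδ (u, z) (humem z hzM) (uh, z) (huhmem z hzM) hd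
    rw [Complex.dist_eq] at this
    have h1 : ‖(criticalPoly u).eval z - (criticalPoly uh).eval z‖ < 1 :=
      lt_of_lt_of_le this (min_le_right _ _)
    calc ‖(criticalPoly u).eval z‖
        ≤ ‖(criticalPoly uh).eval z‖
          + ‖(criticalPoly u).eval z - (criticalPoly uh).eval z‖ := by
          have := norm_add_le ((criticalPoly uh).eval z)
            ((criticalPoly u).eval z - (criticalPoly uh).eval z)
          have h4 : (criticalPoly uh).eval z
              + ((criticalPoly u).eval z - (criticalPoly uh).eval z)
              = (criticalPoly u).eval z := by ring
          rwa [h4] at this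
      _ < 1 + 1 := by exact add_lt_add hz h1
      _ = 2 := by norm_num
  · -- closeness of evaluations
    intro z z' hz hz' hzz'
    have hzM : ‖z‖ ≤ M := by
      by_contra h
      push_neg at h
      have := hMb u hubd z (le_of_lt h)
      linarith
    have hz'M : ‖z'‖ ≤ M := by
      by_contra h
      push_neg at h
      have := hMb u hubd z' (le_of_lt h)
      linarith
    have hd : dist ((u, z) : (Fin m → ℂ) × ℂ) (uh, z') < δ := by
      rw [Prod.dist_eq]
      refine max_lt ?_ ?_
      · rw [dist_eq_norm, ← norm_sub_rev]
        exact hdist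
      · rw [Complex.dist_eq]
        exact hzz'
    have := hδ (u, z) (humem z hzM) (uh, z') (huhmem z' hz'M) hd
    rw [Complex.dist_eq] at this
    exact lt_of_lt_of_le this (min_le_left _ _)
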